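/- arXiv:1501.04506 — 6 statements merged into one kernel-verified Lean document; each statement's English description precedes it below -/
import Mathlib

section
/- Let p be a prime and let Γ be a nontrivial linearly ordered abelian group. If Γ is p-antiregular, then the subgroup pΓ = {p·γ : γ ∈ Γ} has infinite index in Γ. -/
/-- A subgroup `Δ` of a linearly ordered abelian group `Γ` is convex if whenever
`0 ≤ β ≤ δ` and `δ ∈ Δ`, then `β ∈ Δ`. -/
def IsConvexAddSubgroup {Γ : Type*} [AddCommGroup Γ] [LinearOrder Γ] [IsOrderedAddMonoid Γ] (Δ : AddSubgroup Γ) : Prop :=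
  ∀ β δ : Γ, 0 ≤ β → β ≤ δ → δ ∈ Δ → β ∈ Δ

/-- The quotient `Γ/Δ` of `Γ` by the (convex) subgroup `Δ` is `p`-divisible:
for every `γ ∈ Γ` there are `ε ∈ Γ` and `δ ∈ Δ` with `γ = p • ε + δ`. -/
def QuotPDivisible {Γ : Type*} [AddCommGroup Γ] [LinearOrder Γ] [IsOrderedAddMonoid Γ] (p : ℕ) (Δ : AddSubgroup Γ) :
    Prop :=
  ∀ γ : Γ, ∃ ε : Γ, ∃ δ ∈ Δ, γ = p • ε + δ

/-- The quotient `Γ/Δ` has rank `1`: `Δ ≠ Γ` and there is no convex subgroup strictly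
between `Δ` and `Γ`. -/
def QuotRankOne {Γ : Type*} [AddCommGroup Γ] [LinearOrder Γ] [IsOrderedAddMonoid Γ] (Δ : AddSubgroup Γ) : Prop :=
  Δ ≠ ⊤ ∧ ∀ Δ' : AddSubgroup Γ, IsConvexAddSubgroup Δ' → Δ < Δ' → Δ' = ⊤

/-- A linearly ordered abelian group `Γ` is `p`-antiregular if `Γ/Δ` is not `p`-divisible for
every convex subgroup `Δ ≠ Γ`, and no quotient of `Γ` by a convex subgroup has rank `1`. -/
def IsPAntiregular (p : ℕ) (Γ : Type*) [AddCommGroup Γ] [LinearOrder Γ] [IsOrderedAddMonoid Γ] : Prop :=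
  (∀ Δ : AddSubgroup Γ, IsConvexAddSubgroup Δ → Δ ≠ ⊤ → ¬ QuotPDivisible p Δ) ∧
  (∀ Δ : AddSubgroup Γ, IsConvexAddSubgroup Δ → ¬ QuotRankOne Δ)

section Aux

variable {Γ : Type*} [AddCommGroup Γ] [LinearOrder Γ] [IsOrderedAddMonoid Γ]

lemma abs_mem_of_mem {Δ : AddSubgroup Γ} {x : Γ} (hx : x ∈ Δ) : |x| ∈ Δ := by
  rcases abs_choice x with h | h <;> rw [h]
  · exact hx
  · exact Δ.neg_mem hx

lemma mem_of_abs_mem {Δ : AddSubgroup Γ} {x : Γ} (hx : |x| ∈ Δ) : x ∈ Δ := by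
  rcases abs_choice x with h | h
  · rwa [← h]
  · have h2 := Δ.neg_mem hx
    rw [h, neg_neg] at h2
    exact h2

lemma convex_chain {Δ₁ Δ₂ : AddSubgroup Γ} (h₁ : IsConvexAddSubgroup Δ₁)
    (h₂ : IsConvexAddSubgroup Δ₂) : Δ₁ ≤ Δ₂ ∨ Δ₂ ≤ Δ₁ := by
  by_contra h
  rw [not_or] at h
  obtain ⟨x, hx1, hx2⟩ := SetLike.not_le_iff_exists.mp h.1
  obtain ⟨y, hy2, hy1⟩ := SetLike.not_le_iff_exists.mp h.2
  rcases le_total |x| |y| with hle | hle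
  · exact hx2 (mem_of_abs_mem (h₂ |x| |y| (abs_nonneg x) hle (abs_mem_of_mem hy2)))
  · exact hy1 (mem_of_abs_mem (h₁ |y| |x| (abs_nonneg y) hle (abs_mem_of_mem hx1)))

lemma mem_proper_convex [Nontrivial Γ] (h2 : ∀ Δ : AddSubgroup Γ, IsConvexAddSubgroup Δ →
    ¬ QuotRankOne Δ) (γ : Γ) :
    ∃ Δ : AddSubgroup Γ, IsConvexAddSubgroup Δ ∧ Δ ≠ ⊤ ∧ γ ∈ Δ := by
  classical
  set S : Set Γ := {x | ∃ Δ : AddSubgroup Γ, IsConvexAddSubgroup Δ ∧ Δ ≠ ⊤ ∧ x ∈ Δ} with hS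
  have hbot : IsConvexAddSubgroup (⊥ : AddSubgroup Γ) := by
    intro β δ hβ hβδ hδ
    simp only [AddSubgroup.mem_bot] at hδ ⊢
    exact le_antisymm (hδ ▸ hβδ) hβ
  have hbotne : (⊥ : AddSubgroup Γ) ≠ ⊤ := bot_ne_top
  have hzero : (0 : Γ) ∈ S := ⟨⊥, hbot, hbotne, AddSubgroup.zero_mem _⟩
  have hadd : ∀ x y : Γ, x ∈ S → y ∈ S → x + y ∈ S := by
    rintro x y ⟨Δ₁, hc₁, hn₁, hx⟩ ⟨Δ₂, hc₂, hn₂, hy⟩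
    rcases convex_chain hc₁ hc₂ with hle | hle
    · exact ⟨Δ₂, hc₂, hn₂, Δ₂.add_mem (hle hx) hy⟩
    · exact ⟨Δ₁, hc₁, hn₁, Δ₁.add_mem hx (hle hy)⟩
  have hneg : ∀ x : Γ, x ∈ S → -x ∈ S := by
    rintro x ⟨Δ, hc, hn, hx⟩
    exact ⟨Δ, hc, hn, Δ.neg_mem hx⟩
  set Δs : AddSubgroup Γ :=
    { carrier := S
      zero_mem' := hzero
      add_mem' := fun {a b} ha hb => hadd a b ha hb
      neg_mem' := fun {a} ha => hneg a ha } with hΔs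
  have hconv : IsConvexAddSubgroup Δs := by
    rintro β δ hβ hβδ ⟨Δ, hc, hn, hδ⟩
    exact ⟨Δ, hc, hn, hc β δ hβ hβδ hδ⟩
  have htop : Δs = ⊤ := by
    by_contra hne
    have := h2 Δs hconv
    rw [QuotRankOne] at this
    push_neg at this
    obtain ⟨Δ', hc', hlt, hne'⟩ := this hne
    have hle : Δ' ≤ Δs := fun x hx => ⟨Δ', hc', hne', hx⟩
    exact absurd hle (not_le_of_gt hlt)
  have : γ ∈ Δs := htop ▸ AddSubgroup.mem_top γ
  exact this

end Aux

/-- Lemma: antiregular groups have `[Γ : pΓ] = ∞`.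
Let `p` be a prime and `Γ` a nontrivial linearly ordered abelian group. If `Γ` is
`p`-antiregular, then the subgroup `pΓ = {p • γ : γ ∈ Γ}` has infinite index in `Γ`. -/
theorem infinite_index_of_pAntiregular (p : ℕ) (hp : p.Prime)
    (Γ : Type*) [AddCommGroup Γ] [LinearOrder Γ] [IsOrderedAddMonoid Γ] [Nontrivial Γ]
    (hanti : IsPAntiregular p Γ)
    (H : AddSubgroup Γ) (hH : ∀ x : Γ, x ∈ H ↔ ∃ γ : Γ, x = p • γ) :
    Infinite (Γ ⧸ H) := by
  classical
  by_contra hinf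
  rw [not_infinite_iff_finite] at hinf
  haveI : Fintype (Γ ⧸ H) := Fintype.ofFinite _
  -- choose, for each coset, a proper convex subgroup containing a representative
  have key := mem_proper_convex (Γ := Γ) hanti.2
  choose f hfc hfn hfm using fun q : Γ ⧸ H => key (Quotient.out q)
  -- directedness of the chosen family
  have hdir : Directed (· ≤ ·) f := fun a b => by
    rcases convex_chain (hfc a) (hfc b) with h | h
    · exact ⟨b, h, le_refl _⟩
    · exact ⟨a, le_refl _, h⟩
  obtain ⟨q₀, hq₀⟩ := hdir.finset_le (Finset.univ : Finset (Γ ⧸ H))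
  -- the quotient by f q₀ is p-divisible
  refine hanti.1 (f q₀) (hfc q₀) (hfn q₀) ?_
  intro γ
  set q : Γ ⧸ H := QuotientAddGroup.mk γ with hq
  have hout : QuotientAddGroup.mk (Quotient.out q) = q := QuotientAddGroup.out_eq' q
  have hmem : γ - Quotient.out q ∈ H := by
    rw [← QuotientAddGroup.eq_iff_sub_mem, hq, hout]
  obtain ⟨ε, hε⟩ := (hH _).mp hmem
  refine ⟨ε, Quotient.out q, hq₀ q (Finset.mem_univ q) (hfm q), ?_⟩
  exact sub_eq_iff_eq_add.mp hε
end

section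
/- Let p be a prime, let Γ' be a linearly ordered abelian group, and let Γ be a subgroup of Γ' of finite index (with the induced order). Then Γ is p-antiregular if and only if Γ' is p-antiregular. -/
/-- Auxiliary: the subgroup `{γ | n • γ ∈ S}`. -/
def SmulComap {Γ : Type*} [AddCommGroup Γ] (n : ℕ) (S : AddSubgroup Γ) : AddSubgroup Γ where
  carrier := {γ | n • γ ∈ S}
  zero_mem' := by simp [S.zero_mem]
  add_mem' := by
    intro a b ha hb
    simp only [Set.mem_setOf_eq, smul_add] at *
    exact S.add_mem ha hb
  neg_mem' := by
    intro a ha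
    simp only [Set.mem_setOf_eq, smul_neg] at *
    exact S.neg_mem ha

lemma mem_smulComap {Γ : Type*} [AddCommGroup Γ] {n : ℕ} {S : AddSubgroup Γ} {γ : Γ} :
    γ ∈ SmulComap n S ↔ n • γ ∈ S := Iff.rfl

/-- Cancellation in convex subgroups: if `k • γ` lies in a convex subgroup, so does `γ`. -/
lemma convex_cancel {Γ : Type*} [AddCommGroup Γ] [LinearOrder Γ] [IsOrderedAddMonoid Γ] {Δ : AddSubgroup Γ}
    (hΔ : IsConvexAddSubgroup Δ) {k : ℕ} (hk : k ≠ 0) {γ : Γ} (h : k • γ ∈ Δ) : γ ∈ Δ := by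
  have key : ∀ x : Γ, 0 ≤ x → k • x ∈ Δ → x ∈ Δ := by
    intro x hx hkx
    refine hΔ x (k • x) hx ?_ hkx
    calc x = 1 • x := (one_smul ℕ x).symm
    _ ≤ k • x := nsmul_le_nsmul_left hx (Nat.one_le_iff_ne_zero.mpr hk)
  rcases le_total 0 γ with h0 | h0
  · exact key γ h0 h
  · have : k • (-γ) ∈ Δ := by
      rw [smul_neg]; exact Δ.neg_mem h
    have := key (-γ) (neg_nonneg.mpr h0) this
    simpa using Δ.neg_mem this

/-- Iterating `p`-divisibility. -/
lemma quotPDivisible_pow {Γ : Type*} [AddCommGroup Γ] [LinearOrder Γ] [IsOrderedAddMonoid Γ] {p : ℕ}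
    {Δ : AddSubgroup Γ} (h : QuotPDivisible p Δ) (k : ℕ) (γ : Γ) :
    ∃ ε : Γ, ∃ δ ∈ Δ, γ = p ^ k • ε + δ := by
  induction k generalizing γ with
  | zero => exact ⟨γ, 0, Δ.zero_mem, by simp⟩
  | succ k ih =>
    obtain ⟨ε, δ, hδ, hγ⟩ := ih γ
    obtain ⟨ε₁, δ₁, hδ₁, hε⟩ := h ε
    refine ⟨ε₁, p ^ k • δ₁ + δ, Δ.add_mem (Δ.nsmul_mem hδ₁ _) hδ, ?_⟩
    rw [hγ, hε, smul_add, smul_smul, pow_succ]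
    abel


section Transfer

variable {Γ' : Type*} [AddCommGroup Γ'] [LinearOrder Γ'] [IsOrderedAddMonoid Γ'] {Γ : AddSubgroup Γ'}

/-- Upward transfer of `p`-divisibility from a finite-index subgroup. -/
lemma pdiv_up (hfin : Γ.index ≠ 0) {p : ℕ} (hp : p.Prime) {Δ' : AddSubgroup Γ'}
    (hΔ' : IsConvexAddSubgroup Δ')
    (h : QuotPDivisible p (Δ'.comap Γ.subtype)) : QuotPDivisible p Δ' := by
  set n := Γ.index with hn
  set a := n.factorization p with ha
  set u := n / p ^ a with hu
  have hnau : p ^ a * u = n := Nat.ordProj_mul_ordCompl_eq_self n p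
  have hpu : ¬ p ∣ u := Nat.not_dvd_ordCompl hp hfin
  obtain ⟨c, d, hcd⟩ : IsCoprime (p : ℤ) (u : ℤ) := by
    rw [Nat.isCoprime_iff_coprime]
    exact (hp.coprime_iff_not_dvd).mpr hpu
  intro γ'
  have hmem : n • γ' ∈ Γ := Γ.nsmul_index_mem γ'
  obtain ⟨ε, δ, hδ, hEq⟩ := quotPDivisible_pow h (a + 1) (⟨n • γ', hmem⟩ : Γ)
  have hEq' : n • γ' = p ^ (a + 1) • (ε : Γ') + (δ : Γ') := by
    have := congrArg (fun x : Γ => (x : Γ')) hEq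
    push_cast at this
    simpa using this
  have key : u • γ' - p • (ε : Γ') ∈ Δ' := by
    refine convex_cancel hΔ' (k := p ^ a) (pow_ne_zero _ hp.ne_zero) ?_
    have heq2 : p ^ a • (u • γ' - p • (ε : Γ')) = (δ : Γ') := by
      have hn' : (p : ℤ) ^ a * u = n := by exact_mod_cast hnau
      have hδeq : (δ : Γ') = n • γ' - p ^ (a + 1) • (ε : Γ') := by rw [hEq']; abel
      rw [hδeq]
      match_scalars
      · linear_combination hn'
      · push_cast; ring
    rw [heq2]
    exact hδ
  refine ⟨c • γ' + d • (ε : Γ'), d • (u • γ' - p • (ε : Γ')), Δ'.zsmul_mem key d, ?_⟩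
  match_scalars
  · linear_combination hcd.symm
  · push_cast; ring

/-- Downward transfer of `p`-divisibility to a finite-index subgroup. -/
lemma pdiv_down (hfin : Γ.index ≠ 0) {p : ℕ} (hp : p.Prime) {Δ' : AddSubgroup Γ'}
    (h : QuotPDivisible p Δ') : QuotPDivisible p (Δ'.comap Γ.subtype) := by
  set n := Γ.index with hn
  set a := n.factorization p with ha
  set u := n / p ^ a with hu
  have hnau : p ^ a * u = n := Nat.ordProj_mul_ordCompl_eq_self n p
  have hpu : ¬ p ∣ u := Nat.not_dvd_ordCompl hp hfin
  obtain ⟨c, d, hcd⟩ : IsCoprime (p : ℤ) (u : ℤ) := by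
    rw [Nat.isCoprime_iff_coprime]
    exact (hp.coprime_iff_not_dvd).mpr hpu
  intro γ
  obtain ⟨ε', δ', hδ', hEq⟩ := quotPDivisible_pow h (a + 1) (γ : Γ')
  have he : n • ε' ∈ Γ := Γ.nsmul_index_mem ε'
  have hud : u • δ' = u • (γ : Γ') - p • (n • ε') := by
    have hδeq : δ' = (γ : Γ') - p ^ (a + 1) • ε' := by rw [hEq]; abel
    have h1 : p • (n • ε') = u • (p ^ (a + 1) • ε') := by
      rw [smul_smul, smul_smul]
      congr 1
      rw [← hnau]
      ring
    rw [hδeq, smul_sub, h1]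
  have hudΓ : u • δ' ∈ Γ := by
    rw [hud]
    exact Γ.sub_mem (Γ.nsmul_mem γ.2 u) (Γ.nsmul_mem he p)
  refine ⟨c • γ + d • (⟨n • ε', he⟩ : Γ), d • (⟨u • δ', hudΓ⟩ : Γ), ?_, ?_⟩
  · have : (u • δ' : Γ') ∈ Δ' := Δ'.nsmul_mem hδ' u
    exact Δ'.zsmul_mem this d
  · apply Subtype.ext
    push_cast
    rw [hud]
    match_scalars
    · linear_combination hcd.symm
    · push_cast; ring

/-- The preimage in `Γ` of a convex subgroup of `Γ'` is convex. -/
lemma comap_convex {Δ' : AddSubgroup Γ'} (hΔ' : IsConvexAddSubgroup Δ') :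
    IsConvexAddSubgroup (Δ'.comap Γ.subtype) := by
  intro β δ h0 hle hδ
  exact hΔ' (β : Γ') (δ : Γ') (by exact_mod_cast h0) (by exact_mod_cast hle) hδ

end Transfer


section Ext

variable {Γ' : Type*} [AddCommGroup Γ'] [LinearOrder Γ'] [IsOrderedAddMonoid Γ'] {Γ : AddSubgroup Γ'}

lemma mem_map_subtype {Δ : AddSubgroup Γ} {x : Γ'} (hx : x ∈ Γ) :
    x ∈ Δ.map Γ.subtype ↔ (⟨x, hx⟩ : Γ) ∈ Δ := by
  rw [AddSubgroup.mem_map]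
  constructor
  · rintro ⟨y, hy, hyx⟩
    have : (⟨x, hx⟩ : Γ) = y := Subtype.ext hyx.symm
    rw [this]; exact hy
  · intro hx'
    exact ⟨⟨x, hx⟩, hx', rfl⟩

/-- The extension of a subgroup `Δ ≤ Γ` to `Γ'`: all `γ'` with `Γ.index • γ' ∈ Δ`. -/
noncomputable def ExtG (Γ : AddSubgroup Γ') (Δ : AddSubgroup Γ) : AddSubgroup Γ' :=
  SmulComap Γ.index (Δ.map Γ.subtype)

lemma mem_extG {Δ : AddSubgroup Γ} {γ' : Γ'} :
    γ' ∈ ExtG Γ Δ ↔ (⟨Γ.index • γ', Γ.nsmul_index_mem γ'⟩ : Γ) ∈ Δ := by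
  rw [ExtG, mem_smulComap, mem_map_subtype (Γ.nsmul_index_mem γ')]

lemma mk_nsmul_eq {γ : Γ} :
    (⟨Γ.index • (γ : Γ'), Γ.nsmul_index_mem (γ : Γ')⟩ : Γ) = Γ.index • γ :=
  Subtype.ext (by push_cast; rfl)

lemma coe_mem_extG {Δ : AddSubgroup Γ} {γ : Γ} :
    (γ : Γ') ∈ ExtG Γ Δ ↔ Γ.index • γ ∈ Δ := by
  rw [mem_extG, mk_nsmul_eq]

lemma extG_convex {Δ : AddSubgroup Γ} (hΔ : IsConvexAddSubgroup Δ) :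
    IsConvexAddSubgroup (ExtG Γ Δ) := by
  intro β δ h0 hle hδ
  rw [mem_extG] at hδ ⊢
  refine hΔ _ _ ?_ ?_ hδ
  · rw [← Subtype.coe_le_coe]
    push_cast
    exact nsmul_nonneg h0 _
  · rw [← Subtype.coe_le_coe]
    exact nsmul_le_nsmul_right hle _

lemma comap_extG (hfin : Γ.index ≠ 0) {Δ : AddSubgroup Γ} (hΔ : IsConvexAddSubgroup Δ) :
    (ExtG Γ Δ).comap Γ.subtype = Δ := by
  ext γ
  rw [AddSubgroup.mem_comap]
  have : Γ.subtype γ = (γ : Γ') := rfl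
  rw [this, coe_mem_extG]
  constructor
  · exact fun h => convex_cancel hΔ hfin h
  · exact fun h => Δ.nsmul_mem h _

lemma comap_eq_top (hfin : Γ.index ≠ 0) {Δ' : AddSubgroup Γ'} (hΔ' : IsConvexAddSubgroup Δ')
    (h : Δ'.comap Γ.subtype = ⊤) : Δ' = ⊤ := by
  rw [eq_top_iff]
  intro γ' _
  have h1 : (⟨Γ.index • γ', Γ.nsmul_index_mem γ'⟩ : Γ) ∈ Δ'.comap Γ.subtype := by
    rw [h]; trivial
  rw [AddSubgroup.mem_comap] at h1
  exact convex_cancel hΔ' hfin h1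

lemma extG_ne_top (hfin : Γ.index ≠ 0) {Δ : AddSubgroup Γ} (hΔ : IsConvexAddSubgroup Δ)
    (hne : Δ ≠ ⊤) : ExtG Γ Δ ≠ ⊤ := by
  intro h
  apply hne
  rw [← comap_extG hfin hΔ, h, AddSubgroup.comap_top]

lemma le_extG {Δ' : AddSubgroup Γ'} {Δ₂ : AddSubgroup Γ}
    (h : Δ'.comap Γ.subtype ≤ Δ₂) : Δ' ≤ ExtG Γ Δ₂ := by
  intro γ' hγ'
  rw [mem_extG]
  exact h (by rw [AddSubgroup.mem_comap]; exact Δ'.nsmul_mem hγ' _)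

end Ext

/-- Lemma: `p`-antiregularity passes to/from finite-index subgroups.
Let `p` be a prime, `Γ'` a linearly ordered abelian group and `Γ ≤ Γ'` a subgroup of finite
index (with the induced order). Then `Γ` is `p`-antiregular iff `Γ'` is `p`-antiregular. -/
theorem pAntiregular_iff_of_finite_index (p : ℕ) (hp : p.Prime)
    (Γ' : Type*) [AddCommGroup Γ'] [LinearOrder Γ'] [IsOrderedAddMonoid Γ']
    (Γ : AddSubgroup Γ') (hfin : Γ.index ≠ 0) :
    IsPAntiregular p Γ ↔ IsPAntiregular p Γ' := by
  constructor
  · rintro ⟨h1, h2⟩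
    constructor
    · intro Δ' hΔ' hne hdiv
      refine h1 (Δ'.comap Γ.subtype) (comap_convex hΔ') ?_ (pdiv_down hfin hp hdiv)
      intro htop
      exact hne (comap_eq_top hfin hΔ' htop)
    · rintro Δ' hΔ' ⟨hne, hrk⟩
      refine h2 (Δ'.comap Γ.subtype) (comap_convex hΔ') ⟨?_, ?_⟩
      · intro htop
        exact hne (comap_eq_top hfin hΔ' htop)
      · intro Δ₂ hΔ₂ hlt
        obtain ⟨γ, hγ₂, hγΔ⟩ := SetLike.exists_of_lt hlt
        have hlt' : Δ' < ExtG Γ Δ₂ := by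
          refine lt_of_le_of_ne (le_extG hlt.le) ?_
          intro heq
          apply hγΔ
          rw [AddSubgroup.mem_comap]
          have : (γ : Γ') ∈ ExtG Γ Δ₂ := coe_mem_extG.mpr (Δ₂.nsmul_mem hγ₂ _)
          rw [← heq] at this
          exact this
        have htop := hrk (ExtG Γ Δ₂) (extG_convex hΔ₂) hlt'
        rw [← comap_extG hfin hΔ₂, htop, AddSubgroup.comap_top]
  · rintro ⟨h1, h2⟩
    constructor
    · intro Δ hΔ hne hdiv
      refine h1 (ExtG Γ Δ) (extG_convex hΔ) (extG_ne_top hfin hΔ hne) ?_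
      apply pdiv_up hfin hp (extG_convex hΔ)
      rw [comap_extG hfin hΔ]
      exact hdiv
    · rintro Δ hΔ ⟨hne, hrk⟩
      refine h2 (ExtG Γ Δ) (extG_convex hΔ) ⟨extG_ne_top hfin hΔ hne, ?_⟩
      intro Δ'' hΔ'' hlt
      obtain ⟨γ', hγ'', hγE⟩ := SetLike.exists_of_lt hlt
      have hle : Δ ≤ Δ''.comap Γ.subtype := by
        rw [← comap_extG hfin hΔ]
        exact AddSubgroup.comap_mono hlt.le
      have hlt' : Δ < Δ''.comap Γ.subtype := by
        refine lt_of_le_of_ne hle ?_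
        intro heq
        apply hγE
        rw [mem_extG]
        rw [heq, AddSubgroup.mem_comap]
        exact Δ''.nsmul_mem hγ'' _
      have htop := hrk (Δ''.comap Γ.subtype) (comap_convex hΔ'') hlt'
      exact comap_eq_top hfin hΔ'' htop
end

section
/- Let p be a prime and let Γ be a nontrivial linearly ordered abelian group. Then Γ is p-antiregular if and only if for every γ ∈ Γ there exists δ ∈ Γ such that for all ε ∈ Γ with |ε| ≤ p·|γ| one has δ + ε ∉ pΓ. (Here |γ| = max{γ, −γ}.) -/
section Aux
variable {Γ : Type*} [AddCommGroup Γ] [LinearOrder Γ] [IsOrderedAddMonoid Γ]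

lemma aux_mem_of_abs_mem {Δ : AddSubgroup Γ} {x : Γ} (h : |x| ∈ Δ) : x ∈ Δ := by
  rcases abs_choice x with h'|h'
  · rwa [h'] at h
  · have : -x ∈ Δ := by rwa [h'] at h
    simpa using Δ.neg_mem this

lemma aux_abs_mem {Δ : AddSubgroup Γ} {x : Γ} (h : x ∈ Δ) : |x| ∈ Δ := by
  rcases abs_choice x with h'|h'
  · rwa [h']
  · rw [h']; exact Δ.neg_mem h

/-- The convex subgroup of elements archimedean-bounded by `g`. -/
def archSub (g : Γ) : AddSubgroup Γ where
  carrier := {x | ∃ n : ℕ, |x| ≤ n • g}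
  zero_mem' := ⟨0, by simp⟩
  add_mem' := by
    rintro x y ⟨n, hn⟩ ⟨m, hm⟩
    exact ⟨n + m, (abs_add_le x y).trans (by rw [add_nsmul]; exact add_le_add hn hm)⟩
  neg_mem' := by
    rintro x ⟨n, hn⟩
    exact ⟨n, by simpa using hn⟩

/-- The largest convex subgroup not containing `g` (for `g > 0`). -/
def smallSub (g : Γ) (hg : 0 < g) : AddSubgroup Γ where
  carrier := {x | ∀ n : ℕ, n • |x| < g}
  zero_mem' := fun n => by simpa using hg
  add_mem' := by
    rintro x y hx hy n
    have h1 : n • |x + y| ≤ n • |x| + n • |y| := by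
      rw [← nsmul_add]
      exact nsmul_le_nsmul_right (abs_add_le x y) n
    rcases le_total |x| |y| with h | h
    · calc n • |x + y| ≤ n • |x| + n • |y| := h1
        _ ≤ n • |y| + n • |y| := by
            exact add_le_add_left (nsmul_le_nsmul_right h n) _
        _ = (n + n) • |y| := (add_nsmul _ _ _).symm
        _ < g := hy _
    · calc n • |x + y| ≤ n • |x| + n • |y| := h1
        _ ≤ n • |x| + n • |x| := add_le_add_right (nsmul_le_nsmul_right h n) _
        _ = (n + n) • |x| := (add_nsmul _ _ _).symm
        _ < g := hx _
  neg_mem' := by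
    rintro x hx n
    simpa using hx n

end Aux

/-- first-order characterization of `p`-antiregularity.
Let `p` be a prime and `Γ` a nontrivial linearly ordered abelian group. Then `Γ` is
`p`-antiregular iff for every `γ ∈ Γ` there exists `δ ∈ Γ` such that for every `ε ∈ Γ` with
`|ε| ≤ p • |γ|` one has `δ + ε ∉ pΓ`. -/
theorem pAntiregular_iff_firstOrder (p : ℕ) (hp : p.Prime)
    (Γ : Type*) [AddCommGroup Γ] [LinearOrder Γ] [IsOrderedAddMonoid Γ] [Nontrivial Γ] :
    IsPAntiregular p Γ ↔
      ∀ γ : Γ, ∃ δ : Γ, ∀ ε : Γ, |ε| ≤ p • |γ| → ∀ y : Γ, δ + ε ≠ p • y := by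
  constructor
  · rintro ⟨hdiv, hrank⟩ γ
    by_cases hγ : γ = 0
    · -- need some δ ∉ pΓ
      have hbot : IsConvexAddSubgroup (⊥ : AddSubgroup Γ) := by
        intro β d hβ hβd hd
        simp only [AddSubgroup.mem_bot] at hd ⊢
        subst hd
        exact le_antisymm hβd hβ
      have hbotne : (⊥ : AddSubgroup Γ) ≠ ⊤ := by
        obtain ⟨x, hx⟩ := exists_ne (0 : Γ)
        intro h
        exact hx (by simpa using (h ▸ AddSubgroup.mem_top x : x ∈ (⊥ : AddSubgroup Γ)))
      have := hdiv ⊥ hbot hbotne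
      rw [QuotPDivisible] at this
      push_neg at this
      obtain ⟨δ, hδ⟩ := this
      refine ⟨δ, fun ε hε y h => ?_⟩
      subst hγ
      simp only [abs_zero, smul_zero, abs_nonpos_iff] at hε
      subst hε
      exact hδ y 0 (by simp) (by simpa using h)
    · set g := |γ| with hg_def
      have hg : 0 < g := abs_pos.mpr hγ
      -- the largest convex subgroup not containing g
      have hconv0 : IsConvexAddSubgroup (smallSub g hg) := by
        intro β d hβ hβd hd n
        have habsle : |β| ≤ |d| := by
          rw [abs_of_nonneg hβ, abs_of_nonneg (hβ.trans hβd)]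
          exact hβd
        exact lt_of_le_of_lt (nsmul_le_nsmul_right habsle n) (hd n)
      have hg_not : g ∉ smallSub g hg := by
        intro h
        have := h 1
        rw [one_nsmul, abs_of_nonneg hg.le] at this
        exact lt_irrefl g this
      have hne0 : smallSub g hg ≠ ⊤ := fun h => hg_not (h ▸ AddSubgroup.mem_top g)
      have := hrank (smallSub g hg) hconv0
      rw [QuotRankOne] at this
      push_neg at this
      obtain ⟨Δ', hΔ'conv, hlt, hΔ'ne⟩ := this hne0
      -- g ∈ Δ'
      have hgΔ' : g ∈ Δ' := by
        obtain ⟨x, hxΔ', hx0⟩ := SetLike.exists_of_lt hlt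
        simp only [smallSub, AddSubgroup.mem_mk, Set.mem_setOf_eq] at hx0
        change ¬ ∀ n : ℕ, n • |x| < g at hx0
        push_neg at hx0
        obtain ⟨n, hn⟩ := hx0
        have habs : |x| ∈ Δ' := aux_abs_mem hxΔ'
        exact hΔ'conv g (n • |x|) hg.le hn (AddSubgroup.nsmul_mem Δ' habs n)
      have hpg : p • g ∈ Δ' := AddSubgroup.nsmul_mem Δ' hgΔ' p
      have := hdiv Δ' hΔ'conv hΔ'ne
      rw [QuotPDivisible] at this
      push_neg at this
      obtain ⟨δ, hδ⟩ := this
      refine ⟨δ, fun ε hε y h => ?_⟩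
      have hεΔ' : ε ∈ Δ' := aux_mem_of_abs_mem
        (hΔ'conv |ε| (p • g) (abs_nonneg ε) hε hpg)
      exact hδ y (-ε) (Δ'.neg_mem hεΔ') (by rw [← h]; abel)
  · intro cond
    constructor
    · intro Δ hΔconv hΔne hPdiv
      -- pick γ ∉ Δ
      obtain ⟨γ, hγ⟩ : ∃ γ : Γ, γ ∉ Δ := by
        by_contra h
        push_neg at h
        exact hΔne ((AddSubgroup.eq_top_iff' Δ).mpr h)
      obtain ⟨δ, hδ⟩ := cond γ
      obtain ⟨ε', d, hd, hδeq⟩ := hPdiv δ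
      -- |d| < |γ|
      have hdlt : |d| < |γ| := by
        by_contra h
        push_neg at h
        exact hγ (aux_mem_of_abs_mem (hΔconv |γ| |d| (abs_nonneg γ) h
          (aux_abs_mem hd)))
      have hbound : |(-d)| ≤ p • |γ| := by
        rw [abs_neg]
        calc |d| ≤ |γ| := hdlt.le
          _ = 1 • |γ| := (one_nsmul _).symm
          _ ≤ p • |γ| := nsmul_le_nsmul_left (abs_nonneg γ) hp.one_lt.le
      exact hδ (-d) hbound ε' (by rw [hδeq]; abel)
    · intro Δ hΔconv ⟨hΔne, hmax⟩
      obtain ⟨γ, hγ⟩ : ∃ γ : Γ, γ ∉ Δ := by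
        by_contra h
        push_neg at h
        exact hΔne ((AddSubgroup.eq_top_iff' Δ).mpr h)
      have hγ0 : γ ≠ 0 := fun h => hγ (h ▸ Δ.zero_mem)
      set g := |γ| with hg_def
      have hg : 0 < g := abs_pos.mpr hγ0
      have hgΔ : g ∉ Δ := fun h => hγ (aux_mem_of_abs_mem h)
      -- Δ < archSub g, convex, so archSub g = ⊤ : g is cofinal
      have harchconv : IsConvexAddSubgroup (archSub g) := by
        rintro β d hβ hβd ⟨n, hn⟩
        exact ⟨n, by
          rw [abs_of_nonneg hβ]
          exact hβd.trans (le_trans (le_abs_self d) hn)⟩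
      have hsub : Δ ≤ archSub g := by
        intro d hd
        refine ⟨1, ?_⟩
        rw [one_nsmul]
        by_contra h
        push_neg at h
        exact hgΔ (hΔconv g |d| hg.le h.le (aux_abs_mem hd))
      have hglt : Δ < archSub g := lt_of_le_of_ne hsub (by
        intro h
        exact hgΔ (h ▸ (⟨1, by rw [one_nsmul]; exact le_of_eq (abs_of_nonneg hg.le)⟩ :
          g ∈ archSub g)))
      have htop : archSub g = ⊤ := hmax _ harchconv hglt
      -- cofinality: every element bounded by n • g
      have hcof : ∀ x : Γ, ∃ n : ℕ, |x| ≤ n • g := by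
        intro x
        have : x ∈ archSub g := htop ▸ AddSubgroup.mem_top x
        exact this
      obtain ⟨δ, hδ⟩ := cond γ
      obtain ⟨n, hn⟩ := hcof δ
      -- greatest integer m with m • g ≤ δ
      have hbdd : ∃ b : ℤ, ∀ z : ℤ, z • g ≤ δ → z ≤ b := by
        refine ⟨n, fun z hz => ?_⟩
        have : z • g ≤ (n : ℤ) • g := by
          rw [natCast_zsmul]
          exact hz.trans ((le_abs_self δ).trans hn)
        exact (zsmul_le_zsmul_iff_left hg).mp this
      have hinh : ∃ z : ℤ, z • g ≤ δ := by
        refine ⟨-(n : ℤ), ?_⟩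
        rw [neg_zsmul, natCast_zsmul]
        exact neg_le_of_neg_le ((neg_le_abs δ).trans hn)
      obtain ⟨m, hm, hmmax⟩ := Int.exists_greatest_of_bdd hbdd hinh
      have hδlt : δ < (m + 1) • g := by
        by_contra h
        push_neg at h
        have := hmmax (m + 1) h
        omega
      set r := m % (p : ℤ) with hr_def
      set q := m / (p : ℤ) with hq_def
      have hp0 : (0 : ℤ) < p := by exact_mod_cast hp.pos
      have hr0 : 0 ≤ r := Int.emod_nonneg m (by positivity)
      have hrp : r < p := Int.emod_lt_of_pos m hp0
      have hmqr : (p : ℤ) * q + r = m := Int.mul_ediv_add_emod m p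
      set y := q • g with hy_def
      have hpy : p • y = ((p : ℤ) * q) • g := by
        rw [hy_def, ← natCast_zsmul, ← mul_zsmul]
      set ε := p • y - δ with hε_def
      have hεle : -ε = δ - ((p:ℤ)*q) • g := by rw [hε_def, hpy]; abel
      have key : 0 ≤ -ε ∧ -ε < p • g := by
        constructor
        · rw [hεle]
          have : ((p:ℤ)*q) • g ≤ m • g := by
            apply zsmul_le_zsmul_left hg.le
            omega
          exact sub_nonneg.mpr (this.trans hm)
        · rw [hεle]
          have h1 : ((p:ℤ)*q) • g = m • g - r • g := by
            have : ((p:ℤ)*q) • g = (m - r) • g := by congr 1; omega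
            rw [this, sub_zsmul, ← sub_eq_add_neg]
          have h2 : r • g ≤ ((p:ℤ) - 1) • g := zsmul_le_zsmul_left hg.le (by omega)
          have h3 : δ - m • g < g := by
            rw [add_zsmul, one_zsmul] at hδlt
            exact sub_lt_iff_lt_add'.mpr hδlt
          have h4 : ((p:ℤ) - 1) • g = (p:ℤ) • g - g := by
            rw [sub_zsmul, one_zsmul, ← sub_eq_add_neg]
          have h5 : (p:ℤ) • g = p • g := by rw [natCast_zsmul]
          rw [h1]
          have : δ - (m • g - r • g) = (δ - m • g) + r • g := by abel
          rw [this]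
          calc (δ - m • g) + r • g < g + ((p:ℤ) - 1) • g := by
                exact add_lt_add_of_lt_of_le h3 h2
            _ = (p:ℤ) • g := by rw [h4]; abel
            _ = p • g := h5
      have habsε : |ε| ≤ p • g := by
        rw [abs_of_nonpos (neg_nonneg.mp key.1)]
        exact key.2.le
      exact hδ ε habsε y (by rw [hε_def]; abel)
end

section
/- Let Γ be a linearly ordered abelian group and p a prime. Let D be the collection of all convex subgroups Δ of Γ such that Γ/Δ is p-divisible, and let Δ₀ be the intersection of all members of D. Then Δ₀ is a convex subgroup of Γ, and for every convex subgroup Δ of Γ with Δ₀ ⊊ Δ, the quotient Γ/Δ is p-divisible (so that Γ/Δ₀ is p-regular). -/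
/-- Two convex subgroups of a linearly ordered abelian group are comparable. -/
lemma convex_subset_of_not_subset {Γ : Type*} [AddCommGroup Γ] [LinearOrder Γ] [IsOrderedAddMonoid Γ]
    {Δ₁ Δ₂ : AddSubgroup Γ} (h₁ : IsConvexAddSubgroup Δ₁) (h₂ : IsConvexAddSubgroup Δ₂)
    {a : Γ} (ha₁ : a ∈ Δ₁) (ha₂ : a ∉ Δ₂) : Δ₂ ≤ Δ₁ := by
  intro b hb
  have habs₁ : |a| ∈ Δ₁ := by
    rcases abs_choice a with h | h
    · rw [h]; exact ha₁
    · rw [h]; exact Δ₁.neg_mem ha₁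
  have hbabs : |b| ∈ Δ₂ := by
    rcases abs_choice b with h | h
    · rw [h]; exact hb
    · rw [h]; exact Δ₂.neg_mem hb
  rcases le_total |b| |a| with h | h
  · have : |b| ∈ Δ₁ := h₁ |b| |a| (abs_nonneg b) h habs₁
    rcases abs_choice b with hh | hh
    · rw [← hh]; exact this
    · have := Δ₁.neg_mem this; rwa [hh, neg_neg] at this
  · exfalso
    have : |a| ∈ Δ₂ := h₂ |a| |b| (abs_nonneg a) h hbabs
    rcases abs_choice a with hh | hh
    · exact ha₂ (hh ▸ this)
    · have := Δ₂.neg_mem this; rw [hh, neg_neg] at this; exact ha₂ this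

/-- Lemma: the maximal `p`-regular quotient.
Let `Γ` be a linearly ordered abelian group and `p` a prime. Let `D` be the collection of all
convex subgroups `Δ` of `Γ` with `Γ/Δ` `p`-divisible and let `Δ₀` be the intersection of all
members of `D`. Then `Δ₀` is a convex subgroup of `Γ` and `Γ/Δ` is `p`-divisible for every
convex subgroup `Δ` with `Δ₀ ⊊ Δ` (i.e. `Γ/Δ₀` is `p`-regular). -/
theorem inter_pDivisible_convex_isConvex_and_pRegular (p : ℕ) (hp : p.Prime)
    (Γ : Type*) [AddCommGroup Γ] [LinearOrder Γ] [IsOrderedAddMonoid Γ] :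
    ∃ Δ₀ : AddSubgroup Γ,
      ((Δ₀ : Set Γ) =
        ⋂ Δ ∈ {Δ : AddSubgroup Γ | IsConvexAddSubgroup Δ ∧ QuotPDivisible p Δ}, (Δ : Set Γ)) ∧
      IsConvexAddSubgroup Δ₀ ∧
      ∀ Δ : AddSubgroup Γ, IsConvexAddSubgroup Δ → Δ₀ < Δ → QuotPDivisible p Δ := by
  set S := {Δ : AddSubgroup Γ | IsConvexAddSubgroup Δ ∧ QuotPDivisible p Δ}
  refine ⟨sInf S, ?_, ?_, ?_⟩
  · exact AddSubgroup.coe_sInf S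
  · intro β δ hβ hβδ hδ
    rw [AddSubgroup.mem_sInf] at hδ ⊢
    intro Δ hΔ
    exact hΔ.1 β δ hβ hβδ (hδ Δ hΔ)
  · intro Δ hΔ hlt
    obtain ⟨γ, hγΔ, hγ⟩ := SetLike.exists_of_lt hlt
    rw [AddSubgroup.mem_sInf] at hγ
    push_neg at hγ
    obtain ⟨Δ', hΔ'S, hγΔ'⟩ := hγ
    have hle : Δ' ≤ Δ := convex_subset_of_not_subset hΔ hΔ'S.1 hγΔ hγΔ'
    intro x
    obtain ⟨ε, δ, hδ, hx⟩ := hΔ'S.2 x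
    exact ⟨ε, δ, hle hδ, hx⟩
end

section
/- Let Γ be a linearly ordered abelian group, p a prime, and γ ∈ Γ with γ > 0. Define Δ_γ := {δ ∈ Γ : [0, p·|δ|] ⊆ [0, p·γ] + pΓ}, where |δ| = max{δ, −δ}. Then Δ_γ is a convex subgroup of Γ containing γ, and for every convex subgroup Δ̃ of Γ with Δ_γ ⊆ Δ̃, if Δ̃/Δ_γ is p-divisible (i.e. for every δ̃ ∈ Δ̃ there are β ∈ Δ̃ and δ ∈ Δ_γ with δ̃ = pβ + δ), then Δ̃ = Δ_γ; in other words, no nontrivial convex subgroup of Γ/Δ_γ is p-divisible. -/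
/-- Lemma: the definable convex subgroup `Δ_γ`.
Let `Γ` be a linearly ordered abelian group, `p` a prime and `γ > 0`. Set
`Δ_γ = {δ : [0, p•|δ|] ⊆ [0, p•γ] + pΓ}`. Then `Δ_γ` is a convex subgroup of `Γ` containing
`γ`, and every convex subgroup `Δ̃ ⊇ Δ_γ` such that `Δ̃/Δ_γ` is `p`-divisible equals `Δ_γ`;
in other words, no nontrivial convex subgroup of `Γ/Δ_γ` is `p`-divisible. -/
theorem deltaGamma_convexSubgroup (p : ℕ) (hp : p.Prime)
    (Γ : Type*) [AddCommGroup Γ] [LinearOrder Γ] [IsOrderedAddMonoid Γ] (γ : Γ) (hγ : 0 < γ) :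
    ∃ Δγ : AddSubgroup Γ,
      ((Δγ : Set Γ) = {δ : Γ | ∀ β : Γ, 0 ≤ β → β ≤ p • |δ| →
        ∃ α : Γ, 0 ≤ α ∧ α ≤ p • γ ∧ ∃ ε : Γ, β = α + p • ε}) ∧
      IsConvexAddSubgroup Δγ ∧ γ ∈ Δγ ∧
      ∀ Δt : AddSubgroup Γ, IsConvexAddSubgroup Δt → Δγ ≤ Δt →
        (∀ d ∈ Δt, ∃ b ∈ Δt, ∃ δ ∈ Δγ, d = p • b + δ) → Δt = Δγ := by
  have hp1 : 1 ≤ p := hp.one_lt.le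
  set S : Set Γ := {δ : Γ | ∀ β : Γ, 0 ≤ β → β ≤ p • |δ| →
      ∃ α : Γ, 0 ≤ α ∧ α ≤ p • γ ∧ ∃ ε : Γ, β = α + p • ε} with hS
  have zero_mem : (0 : Γ) ∈ S := by
    intro β hβ0 hβ
    have hβ' : β ≤ 0 := by simpa using hβ
    exact ⟨0, le_refl 0, by positivity, 0, by simp [le_antisymm hβ' hβ0]⟩
  have add_mem : ∀ {a b : Γ}, a ∈ S → b ∈ S → a + b ∈ S := by
    intro a b ha hb β hβ0 hβ
    have habs : |a + b| ≤ |a| + |b| := abs_add_le a b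
    by_cases h1 : β ≤ p • |a|
    · exact ha β hβ0 h1
    · push_neg at h1
      have hsum : β ≤ p • |a| + p • |b| := by
        calc β ≤ p • (|a| + |b|) := hβ.trans (nsmul_le_nsmul_right habs p)
        _ = p • |a| + p • |b| := smul_add p |a| |b|
      have h2 : β - p • |a| ≤ p • |b| :=
        sub_le_iff_le_add.mpr (by rwa [add_comm] at hsum)
      obtain ⟨α, hα0, hαγ, ε, hε⟩ := hb (β - p • |a|) (sub_nonneg.mpr h1.le) h2
      refine ⟨α, hα0, hαγ, |a| + ε, ?_⟩
      have hβeq : β = (α + p • ε) + p • |a| := by rw [← hε]; abel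
      rw [hβeq, smul_add]; abel
  have neg_mem : ∀ {a : Γ}, a ∈ S → -a ∈ S := by
    intro a ha β hβ0 hβ
    exact ha β hβ0 (by simpa [abs_neg] using hβ)
  refine ⟨{ carrier := S, zero_mem' := zero_mem, add_mem' := add_mem,
            neg_mem' := neg_mem }, rfl, ?_, ?_, ?_⟩
  · -- convex
    intro β δ hβ0 hβδ hδ
    intro x hx0 hx
    have habs : |β| ≤ |δ| := by
      rw [abs_of_nonneg hβ0]
      exact hβδ.trans (le_abs_self δ)
    exact hδ x hx0 (hx.trans (nsmul_le_nsmul_right habs p))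
  · -- γ ∈ S
    intro β hβ0 hβ
    exact ⟨β, hβ0, by simpa [abs_of_pos hγ] using hβ, 0, by simp⟩
  · -- maximality
    intro Δt hconv hle hdiv
    have hrep : ∀ δ ∈ S, ∃ α : Γ, 0 ≤ α ∧ α ≤ p • γ ∧ ∃ ε : Γ, δ = α + p • ε := by
      intro δ hδ
      rcases le_or_gt 0 δ with h | h
      · refine hδ δ h ?_
        calc δ = 1 • δ := (one_smul ℕ δ).symm
        _ ≤ p • δ := nsmul_le_nsmul_left h hp1
        _ = p • |δ| := by rw [abs_of_nonneg h]
      · have hδ' : (0:Γ) ≤ -δ := neg_nonneg.mpr h.le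
        obtain ⟨α, hα0, hαγ, ε, hε⟩ := hδ (-δ) hδ' (by
          calc -δ = 1 • (-δ) := (one_smul ℕ (-δ)).symm
          _ ≤ p • (-δ) := nsmul_le_nsmul_left hδ' hp1
          _ = p • |δ| := by rw [abs_of_neg h])
        refine ⟨p • γ - α, sub_nonneg.mpr hαγ, sub_le_self _ hα0, -ε - γ, ?_⟩
        have h2 : p • (-ε - γ) = -(p • ε) - p • γ := by
          rw [show -ε - γ = -(ε + γ) from by abel, smul_neg, smul_add]; abel
        have hδeq : δ = -(α + p • ε) := by rw [← hε]; simp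
        rw [hδeq, h2]; abel
    apply le_antisymm _ hle
    intro d hd
    show d ∈ S
    intro β hβ0 hβ
    have habsmem : |d| ∈ Δt := by
      rcases abs_choice d with h | h
      · rw [h]; exact hd
      · rw [h]; exact Δt.neg_mem hd
    have hβmem : β ∈ Δt := hconv β (p • |d|) hβ0 hβ (Δt.nsmul_mem habsmem p)
    obtain ⟨b, hb, δ, hδ, hβeq⟩ := hdiv β hβmem
    obtain ⟨α, hα0, hαγ, ε, hε⟩ := hrep δ hδ
    refine ⟨α, hα0, hαγ, b + ε, ?_⟩
    rw [hβeq, hε, smul_add]; abel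
end

section
/- Let K be a field and O a nontrivial henselian valuation subring of K whose value group vK = K^×/O^× is not divisible (i.e. not p-divisible for some prime p). Then there exist t ∈ K and a valuation subring O' of K with O ⊆ O' and O' ≠ K (so O' is a nontrivial henselian coarsening of O) such that O' is definable using at most one parameter, namely {t}-definable. -/
open FirstOrder Language

attribute [local instance] FirstOrder.Ring.compatibleRingOfRing

universe u

section OrderedGroups

/-- A subgroup `Δ` of a (multiplicatively written) linearly ordered abelian group `G` is
convex if whenever `1 ≤ β ≤ δ` and `δ ∈ Δ`, then `β ∈ Δ`. -/
def IsConvexSubgroup {G : Type*} [CommGroup G] [LinearOrder G] [IsOrderedMonoid G] (Δ : Subgroup G) : Prop :=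
  ∀ β δ : G, 1 ≤ β → β ≤ δ → δ ∈ Δ → β ∈ Δ

/-- The quotient `G/Δ` by the (convex) subgroup `Δ` is `p`-divisible (multiplicatively:
every element is a `p`-th power modulo `Δ`). -/
def MulQuotPDivisible {G : Type*} [CommGroup G] [LinearOrder G] [IsOrderedMonoid G] (p : ℕ) (Δ : Subgroup G) :
    Prop :=
  ∀ γ : G, ∃ ε : G, ∃ δ ∈ Δ, γ = ε ^ p * δ

/-- The quotient `G/Δ` has rank `1`: `Δ ≠ G` and there is no convex subgroup strictly
between `Δ` and `G`. -/
def MulQuotRankOne {G : Type*} [CommGroup G] [LinearOrder G] [IsOrderedMonoid G] (Δ : Subgroup G) : Prop :=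
  Δ ≠ ⊤ ∧ ∀ Δ' : Subgroup G, IsConvexSubgroup Δ' → Δ < Δ' → Δ' = ⊤

/-- A (multiplicatively written) linearly ordered abelian group `G` is `p`-antiregular if
`G/Δ` is not `p`-divisible for every convex subgroup `Δ ≠ G` and no quotient of `G` by a
convex subgroup has rank `1`. -/
def MulIsPAntiregular (p : ℕ) (G : Type*) [CommGroup G] [LinearOrder G] [IsOrderedMonoid G] : Prop :=
  (∀ Δ : Subgroup G, IsConvexSubgroup Δ → Δ ≠ ⊤ → ¬ MulQuotPDivisible p Δ) ∧
  (∀ Δ : Subgroup G, IsConvexSubgroup Δ → ¬ MulQuotRankOne Δ)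

end OrderedGroups

variable {K : Type u} [Field K]

/-- The value group `vK = K^×/O^×` of a valuation subring `O` of `K`, realized as the group
of units of Mathlib's value "group with zero" of `O`; it is a linearly ordered abelian
group. -/
abbrev valueGrp (O : ValuationSubring K) : Type u := (O.ValueGroup)ˣ

/-- The value group `K^×/O^×` of `O` is `p`-divisible: every element is (multiplicatively)
a `p`-th power. -/
def ValueGroupPDivisible (O : ValuationSubring K) (p : ℕ) : Prop :=
  ∀ g : valueGrp O, ∃ h : valueGrp O, g = h ^ p

/-- The value group `K^×/O^×` of `O` is divisible: every element is an `n`-th power for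
every `n ≥ 1`. -/
def ValueGroupDivisible (O : ValuationSubring K) : Prop :=
  ∀ n : ℕ, 1 ≤ n → ∀ g : valueGrp O, ∃ h : valueGrp O, g = h ^ n

/-- A field admits a nontrivial henselian valuation, i.e. a valuation subring `O ≠ K` which
is a henselian local ring. -/
def IsHenselianField (K : Type u) [Field K] : Prop :=
  ∃ O : ValuationSubring K, O ≠ ⊤ ∧ HenselianLocalRing O

/-- `O` is the canonical henselian valuation of `K`: it is henselian, and either it has
separably closed residue field and contains every henselian valuation subring with separably
closed residue field (the coarsest such), or no henselian valuation subring of `K` has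
separably closed residue field and `O` is contained in every henselian valuation subring
(the finest henselian valuation). -/
def IsCanonicalHenselian (O : ValuationSubring K) : Prop :=
  HenselianLocalRing O ∧
    ((IsSepClosed (IsLocalRing.ResidueField O) ∧
        ∀ O' : ValuationSubring K, HenselianLocalRing O' →
          IsSepClosed (IsLocalRing.ResidueField O') → O' ≤ O) ∨
     ((∀ O' : ValuationSubring K, HenselianLocalRing O' →
          ¬ IsSepClosed (IsLocalRing.ResidueField O')) ∧
      (∀ O' : ValuationSubring K, HenselianLocalRing O' → O ≤ O')))

/-- A field `F` is `t`-henselian if some field `L`, elementarily equivalent to `F` in the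
first-order language of rings, admits a nontrivial henselian valuation. -/
def IsTHenselian (F : Type u) [Field F] : Prop :=
  ∃ (L : Type u) (_ : Field L), (F ≅[Language.ring] L) ∧ IsHenselianField L


section AuxiliaryLemmas

open Polynomial Finset

namespace HenselCoarsenAux

lemma exists_artinSchreier_root (O : ValuationSubring K) (hhens : HenselianLocalRing O)
    {p : ℕ} (hp : 2 ≤ p) {a : K} (ha : O.valuation a < 1) :
    ∃ y : K, y ^ p - y = a := by
  have haO : a ∈ O := O.mem_of_valuation_le_one a ha.le
  obtain ⟨m, hm, rfl⟩ : ∃ m, 1 ≤ m ∧ p = m + 1 := ⟨p - 1, by omega, by omega⟩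
  set A : O := ⟨a, haO⟩ with hA
  set f : Polynomial O := X ^ (m + 1) - (X + C A) with hf
  have hmono : f.Monic := by
    apply monic_X_pow_sub
    rw [degree_X_add_C]
    exact_mod_cast (show (1:ℕ) < m + 1 by omega)
  have heval : f.eval 0 ∈ IsLocalRing.maximalIdeal O := by
    have : f.eval 0 = -A := by simp [hf, zero_pow (by omega : m + 1 ≠ 0)]
    rw [this]
    refine neg_mem ?_
    rw [← ValuationSubring.coe_mem_nonunits_iff, ValuationSubring.mem_nonunits_iff]
    exact ha
  have hderiv : IsUnit (f.derivative.eval 0) := by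
    have : f.derivative.eval 0 = -1 := by
      simp [hf, derivative_X_pow, zero_pow (by omega : m ≠ 0)]
    rw [this]
    exact isUnit_one.neg
  obtain ⟨y, hy, -⟩ := hhens.is_henselian f hmono 0 heval hderiv
  refine ⟨(y : K), ?_⟩
  have h1 : y ^ (m + 1) - (y + A) = 0 := by
    have := hy
    simpa [hf, Polynomial.IsRoot] using this
  have h2 : ((y : K)) ^ (m + 1) - ((y : K) + a) = 0 := by
    have h3 := congrArg (Subtype.val) h1
    push_cast at h3
    simpa [hA] using h3
  linear_combination h2

lemma artinSchreier_set_char (O : ValuationSubring K) (hhens : HenselianLocalRing O)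
    {p : ℕ} (hp : 2 ≤ p) {t : K}
    (ht : ∀ s : K, s ≠ 0 → O.valuation t ≠ O.valuation s ^ p) (x : K) :
    (∃ y : K, y ^ p - y = t * x ^ p) ↔ O.valuation t * O.valuation x ^ p < 1 := by
  set v := O.valuation with hv
  constructor
  · rintro ⟨y, hy⟩
    by_contra hlt
    push_neg at hlt
    have hx0 : x ≠ 0 := by
      rintro rfl
      rw [map_zero, zero_pow (by omega : p ≠ 0), mul_zero] at hlt
      exact absurd hlt (by simp)
    have hvx : v x ≠ 0 := fun h => hx0 ((Valuation.zero_iff v).mp h)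
    rcases eq_or_lt_of_le hlt with h1 | h1
    · refine ht x⁻¹ (inv_ne_zero hx0) ?_
      rw [map_inv₀, inv_pow]
      exact eq_inv_of_mul_eq_one_left h1.symm
    · have hval : v (y ^ p - y) = v t * v x ^ p := by
        rw [hy, map_mul, map_pow]
      rcases le_or_gt (v y) 1 with hy1 | hy1
      · have : v (y ^ p - y) ≤ 1 := by
          refine le_trans (Valuation.map_sub v _ _) ?_
          rw [map_pow]
          exact max_le (pow_le_one' hy1 p) hy1
        rw [hval] at this
        exact absurd this (not_le_of_gt h1)
      · have hy0 : v y ≠ 0 := ne_of_gt (lt_trans zero_lt_one hy1)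
        have hyp : v y < v y ^ p := by
          calc v y < v y * v y := (lt_mul_iff_one_lt_left (lt_trans zero_lt_one hy1)).mpr hy1
          _ = v y ^ 2 := (sq (v y)).symm
          _ ≤ v y ^ p := pow_le_pow_right' hy1.le hp
        have hval2 : v (y ^ p - y) = v y ^ p := by
          rw [Valuation.map_sub_swap, Valuation.map_sub_eq_of_lt_right _ (by rwa [map_pow])]
          rw [map_pow]
        have hy0' : y ≠ 0 := fun h => hy0 (by rw [h, map_zero])
        refine ht (y * x⁻¹) (mul_ne_zero hy0' (inv_ne_zero hx0)) ?_
        rw [map_mul, map_inv₀, mul_pow, inv_pow]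
        have key : v y ^ p = v t * v x ^ p := hval2.symm.trans hval
        rw [key, mul_assoc, mul_inv_cancel₀ (pow_ne_zero p hvx), mul_one]
  · intro h
    have : v (t * x ^ p) < 1 := by rwa [map_mul, map_pow]
    exact exists_artinSchreier_root O hhens hp this

/-- The multiplicative stabilizer of the set `{x : v t * v x ^ p < 1}`, as a valuation
subring of `K`. -/
def stabilizerValuationSubring (O : ValuationSubring K) {p : ℕ} (hp : 2 ≤ p) (t : K) :
    ValuationSubring K where
  carrier := {z : K | ∀ x : K,
    O.valuation t * O.valuation x ^ p < 1 → O.valuation t * O.valuation (z * x) ^ p < 1}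
  one_mem' := by intro x hx; simpa using hx
  zero_mem' := by
    intro x hx
    simp only [zero_mul, map_zero]
    rw [zero_pow (by omega : p ≠ 0), mul_zero]
    exact zero_lt_one
  mul_mem' := by
    intro z w hz hw x hx
    have := hz (w * x) (hw x hx)
    rwa [← mul_assoc] at this
  add_mem' := by
    intro z w hz hw x hx
    have hle : O.valuation ((z + w) * x) ≤
        max (O.valuation (z * x)) (O.valuation (w * x)) := by
      rw [add_mul]
      exact Valuation.map_add _ _ _
    rcases le_total (O.valuation (z * x)) (O.valuation (w * x)) with h | h
    · refine lt_of_le_of_lt ?_ (hw x hx)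
      exact mul_le_mul_right (pow_le_pow_left' (hle.trans (max_le h le_rfl)) p) _
    · refine lt_of_le_of_lt ?_ (hz x hx)
      exact mul_le_mul_right (pow_le_pow_left' (hle.trans (max_le le_rfl h)) p) _
  neg_mem' := by
    intro z hz x hx
    have : (-z) * x = -(z * x) := by ring
    rw [this, Valuation.map_neg]
    exact hz x hx
  mem_or_inv_mem' := by
    intro z
    rcases le_total (O.valuation z) 1 with h | h
    · left
      intro x hx
      refine lt_of_le_of_lt ?_ hx
      rw [map_mul]
      exact mul_le_mul_right (pow_le_pow_left' (by
        calc O.valuation z * O.valuation x ≤ 1 * O.valuation x := mul_le_mul_left h _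
        _ = O.valuation x := one_mul _) p) _
    · right
      intro x hx
      refine lt_of_le_of_lt ?_ hx
      rw [map_mul, map_inv₀]
      refine mul_le_mul_right (pow_le_pow_left' ?_ p) _
      calc O.valuation z⁻¹ * O.valuation x ≤ 1 * O.valuation x := by
            refine mul_le_mul_left ?_ _
            rw [map_inv₀]
            rcases eq_or_ne (O.valuation z) 0 with h0 | h0
            · rw [h0]; simp
            · rw [inv_le_one₀ (lt_of_le_of_ne zero_le' (Ne.symm h0))]
              exact h
      _ = O.valuation x := one_mul _

lemma mem_stabilizer_iff (O : ValuationSubring K) {p : ℕ} (hp : 2 ≤ p) (t z : K) :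
    z ∈ stabilizerValuationSubring O hp t ↔ ∀ x : K,
      O.valuation t * O.valuation x ^ p < 1 →
        O.valuation t * O.valuation (z * x) ^ p < 1 :=
  Iff.rfl

lemma le_stabilizer (O : ValuationSubring K) {p : ℕ} (hp : 2 ≤ p) (t : K) :
    O ≤ stabilizerValuationSubring O hp t := by
  intro z hz
  rw [mem_stabilizer_iff]
  intro x hx
  refine lt_of_le_of_lt ?_ hx
  rw [map_mul]
  refine mul_le_mul_right (pow_le_pow_left' ?_ p) _
  calc O.valuation z * O.valuation x ≤ 1 * O.valuation x :=
        mul_le_mul_left ((O.valuation_le_one_iff z).mpr hz) _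
  _ = O.valuation x := one_mul _

lemma stabilizer_ne_top (O : ValuationSubring K) {p : ℕ} (hp : 2 ≤ p) {t : K}
    (ht0 : t ≠ 0) (ht1 : O.valuation t < 1) :
    stabilizerValuationSubring O hp t ≠ ⊤ := by
  intro htop
  have hmem : t⁻¹ ∈ stabilizerValuationSubring O hp t := by
    rw [htop]; trivial
  rw [mem_stabilizer_iff] at hmem
  have h1 : O.valuation t * O.valuation (1 : K) ^ p < 1 := by
    simpa using ht1
  have h2 := hmem 1 h1
  rw [mul_one, map_inv₀] at h2
  set q := O.valuation t with hq
  have hq0 : q ≠ 0 := fun h => ht0 ((Valuation.zero_iff _).mp h)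
  have hgt : (1 : O.ValueGroup) ≤ q⁻¹ := by
    rw [one_le_inv₀ (lt_of_le_of_ne zero_le' (Ne.symm hq0))]
    exact ht1.le
  obtain ⟨m, rfl⟩ : ∃ m, p = m + 1 := ⟨p - 1, by omega⟩
  have heq : q * q⁻¹ ^ (m + 1) = q⁻¹ ^ m := by
    rw [pow_succ', ← mul_assoc, mul_inv_cancel₀ hq0, one_mul]
  have hge : (1 : O.ValueGroup) ≤ q * q⁻¹ ^ (m + 1) := by
    rw [heq]
    exact Left.one_le_pow_of_le hgt m
  exact absurd h2 (not_lt.mpr hge)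

lemma exists_normalForm_root (O : ValuationSubring K) (hhens : HenselianLocalRing O)
    {n : ℕ} (hn : 1 ≤ n) (e : ℕ → K) (he0 : e 0 = 1) (he1 : e 1 = 1)
    (hei : ∀ i, 2 ≤ i → i ≤ n → O.valuation (e i) < 1) :
    ∃ z : K, O.valuation (z + 1) < 1 ∧
      ∑ i ∈ Finset.range (n + 1), e i * z ^ (n - i) = 0 := by
  set v := O.valuation with hv
  have hle : ∀ i, i ≤ n → v (e i) ≤ 1 := by
    intro i hi
    match i with
    | 0 => rw [he0, map_one]
    | 1 => rw [he1, map_one]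
    | (j+2) => exact (hei (j+2) (by omega) hi).le
  set E : ℕ → O := fun i => if h : v (e i) ≤ 1
    then ⟨e i, (O.valuation_le_one_iff _).mp h⟩ else 1 with hE
  have hEcoe : ∀ i, i ≤ n → ((E i : O) : K) = e i := by
    intro i hi
    simp only [hE, dif_pos (hle i hi)]
  have hE0 : E 0 = 1 := by
    have := hEcoe 0 (by omega)
    exact Subtype.ext (by rw [this, he0]; rfl)
  -- the polynomial
  set P : Polynomial O := ∑ i ∈ Finset.range (n + 1), C (E i) * X ^ (n - i) with hP
  have hPdeg : P.degree ≤ (n : WithBot ℕ) := by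
    refine le_trans (degree_sum_le _ _) ?_
    refine Finset.sup_le fun i hi => ?_
    refine le_trans (degree_C_mul_X_pow_le _ _) ?_
    exact_mod_cast Nat.sub_le n i
  have hPmonic : P.Monic := by
    refine monic_of_degree_le n hPdeg ?_
    rw [hP, finset_sum_coeff]
    rw [Finset.sum_eq_single 0]
    · simp [hE0, coeff_C_mul_X_pow]
    · intro i hi hne
      rw [coeff_C_mul_X_pow, if_neg (by omega)]
    · intro h
      exact absurd (Finset.mem_range.mpr (by omega)) h
  -- evaluation formula over K
  have hevalK : ∀ x : O, ((P.eval x : O) : K) =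
      ∑ i ∈ Finset.range (n + 1), e i * ((x : K)) ^ (n - i) := by
    intro x
    rw [hP, eval_finset_sum]
    push_cast
    refine Finset.sum_congr rfl fun i hi => ?_
    rw [eval_mul, eval_C, eval_pow, eval_X]
    push_cast
    rw [hEcoe i (by simpa [Nat.lt_succ_iff] using hi)]
  -- split of the range sum
  have hsplit : Finset.range (n + 1) = insert 0 (insert 1 (Finset.Ico 2 (n + 1))) := by
    ext i
    simp only [Finset.mem_range, Finset.mem_insert, Finset.mem_Ico]
    omega
  have h01 : (0 : ℕ) ∉ insert 1 (Finset.Ico 2 (n + 1)) := by simp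
  have h1I : (1 : ℕ) ∉ Finset.Ico 2 (n + 1) := by simp
  -- eval at -1 is in the maximal ideal
  have hevalm : P.eval (-1) ∈ IsLocalRing.maximalIdeal O := by
    rw [← ValuationSubring.coe_mem_nonunits_iff, ValuationSubring.mem_nonunits_iff]
    rw [hevalK]
    have hcoe : ((-1 : O) : K) = -1 := by push_cast; ring
    rw [hcoe, hsplit, Finset.sum_insert h01, Finset.sum_insert h1I]
    rw [he0, he1, one_mul, one_mul]
    have hpow : (-1 : K) ^ (n - 0) + (-1 : K) ^ (n - 1) = 0 := by
      have h2 : n - 0 = (n - 1) + 1 := by omega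
      rw [h2, pow_succ]
      ring
    rw [← add_assoc, hpow, zero_add]
    refine Valuation.map_sum_lt _ one_ne_zero fun i hi => ?_
    rw [Finset.mem_Ico] at hi
    rw [map_mul, map_pow, Valuation.map_neg, map_one, one_pow, mul_one]
    exact hei i hi.1 (by omega)
  -- derivative evaluation
  have hderiv : IsUnit (P.derivative.eval (-1)) := by
    rw [ValuationSubring.valuation_eq_one_iff]
    have hD : P.derivative = ∑ i ∈ Finset.range (n + 1),
        C (E i * ((n - i : ℕ) : O)) * X ^ (n - i - 1) := by
      rw [hP, derivative_sum]
      exact Finset.sum_congr rfl fun i _ => by rw [derivative_C_mul_X_pow]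
    have hDevalK : ((P.derivative.eval (-1) : O) : K) =
        ∑ i ∈ Finset.range (n + 1), e i * ((n - i : ℕ) : K) * (-1 : K) ^ (n - i - 1) := by
      rw [hD, eval_finset_sum]
      push_cast
      refine Finset.sum_congr rfl fun i hi => ?_
      rw [eval_mul, eval_C, eval_pow, eval_X]
      push_cast
      rw [hEcoe i (by simpa [Nat.lt_succ_iff] using hi)]
    rw [hDevalK, hsplit, Finset.sum_insert h01, Finset.sum_insert h1I]
    have hM : e 0 * ((n - 0 : ℕ) : K) * (-1 : K) ^ (n - 0 - 1)
        + e 1 * ((n - 1 : ℕ) : K) * (-1 : K) ^ (n - 1 - 1) = (-1 : K) ^ (n - 1) := by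
      rw [he0, he1, one_mul, one_mul]
      match n, hn with
      | 1, _ => norm_num
      | (m + 2), _ =>
        have h1 : m + 2 - 0 - 1 = m + 1 := by omega
        have h2 : m + 2 - 1 - 1 = m := by omega
        have h3 : m + 2 - 0 = m + 2 := by omega
        have h4 : m + 2 - 1 = m + 1 := by omega
        rw [h1, h2, h3, h4, pow_succ]
        push_cast
        ring
    rw [← add_assoc, hM]
    have hvM : v ((-1 : K) ^ (n - 1)) = 1 := by
      rw [map_pow, Valuation.map_neg, map_one, one_pow]
    have hvR : v (∑ i ∈ Finset.Ico 2 (n + 1),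
        e i * ((n - i : ℕ) : K) * (-1 : K) ^ (n - i - 1)) < 1 := by
      refine Valuation.map_sum_lt _ one_ne_zero fun i hi => ?_
      rw [Finset.mem_Ico] at hi
      rw [map_mul, map_mul, map_pow, Valuation.map_neg, map_one, one_pow, mul_one]
      have hcast : v (((n - i : ℕ) : K)) ≤ 1 :=
        (O.valuation_le_one_iff _).mpr (by exact_mod_cast natCast_mem O.toSubring (n - i))
      calc v (e i) * v (((n - i : ℕ) : K)) ≤ v (e i) * 1 := mul_le_mul_right hcast _
      _ = v (e i) := mul_one _
      _ < 1 := hei i hi.1 (by omega)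
    rw [Valuation.map_add_eq_of_lt_left _ (lt_of_lt_of_le hvR (le_of_eq hvM.symm))]
    exact hvM
  obtain ⟨a, haroot, hanear⟩ := hhens.is_henselian P hPmonic (-1) hevalm hderiv
  refine ⟨(a : K), ?_, ?_⟩
  · have heq : a - (-1) = a + 1 := by ring
    rw [heq] at hanear
    have h2 : ((a + 1 : O) : K) ∈ O.nonunits :=
      ValuationSubring.coe_mem_nonunits_iff.mpr hanear
    rw [ValuationSubring.mem_nonunits_iff] at h2
    have hc : ((a + 1 : O) : K) = (a : K) + 1 := by push_cast; ring
    rw [hc] at h2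
    exact h2
  · have h0 : P.eval a = 0 := haroot
    have := hevalK a
    rw [h0] at this
    have hz : ((0 : O) : K) = 0 := by push_cast; ring
    rw [hz] at this
    exact this.symm

/-- A coarsening of a henselian valuation subring is henselian. -/
theorem henselianLocalRing_of_le (O O' : ValuationSubring K) (hle : O ≤ O')
    (hhens : HenselianLocalRing ↥O) : HenselianLocalRing ↥O' := by
  refine ⟨fun f hf a₀ h₁ h₂ => ?_⟩
  set φ : ↥O' →+* K := SubringClass.subtype O' with hφ
  have hφinj : Function.Injective φ := Subtype.coe_injective
  set n := f.natDegree with hn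
  rcases Nat.eq_zero_or_pos n with hn0 | hn0
  · exfalso
    have hf1 : f = 1 := (hf.natDegree_eq_zero).mp hn0
    rw [hf1, eval_one, IsLocalRing.mem_maximalIdeal, mem_nonunits_iff] at h₁
    exact h₁ isUnit_one
  rcases eq_or_ne (f.eval a₀) 0 with hroot | hroot
  · exact ⟨a₀, hroot, by simpa using Ideal.zero_mem _⟩
  -- shifted polynomial
  set g : Polynomial ↥O' := f.comp (X + C a₀) with hg
  have hgmonic : g.Monic := hf.comp_X_add_C a₀
  have hgdeg : g.natDegree = n := by
    rw [hg, natDegree_comp, natDegree_X_add_C, mul_one]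
  set c : ℕ → K := fun i => φ (g.coeff i) with hc
  have hc0 : c 0 = φ (f.eval a₀) := by
    show φ (g.coeff 0) = φ (f.eval a₀)
    simp only [coeff_zero_eq_eval_zero, hg, eval_comp, eval_add, eval_X, eval_C, zero_add]
  have hc1 : c 1 = φ (f.derivative.eval a₀) := by
    have hd : g.derivative = (X + C a₀).derivative * (f.derivative).comp (X + C a₀) := by
      rw [hg, derivative_comp]
    have h1 : g.derivative.coeff 0 = g.coeff 1 := by
      rw [coeff_derivative]
      push_cast
      ring
    have h2 : g.derivative.coeff 0 = f.derivative.eval a₀ := by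
      rw [coeff_zero_eq_eval_zero, hd]
      simp [derivative_X_add_C]
    show φ (g.coeff 1) = φ (f.derivative.eval a₀)
    rw [← h1, h2]
  have hcmem : ∀ i, c i ∈ O' := fun i => (g.coeff i).2
  have hc0ne : c 0 ≠ 0 := by
    rw [hc0]
    intro h
    exact hroot (hφinj (by simpa using h))
  have hc0lt : O'.valuation (c 0) < 1 := by
    rw [hc0]
    exact (ValuationSubring.mem_nonunits_iff _).mp
      (ValuationSubring.coe_mem_nonunits_iff.mpr h₁)
  have hcn : c n = 1 := by
    show φ (g.coeff n) = 1
    rw [← hgdeg, Polynomial.Monic.coeff_natDegree hgmonic]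
    exact map_one φ
  have hc1unit : IsUnit (g.coeff 1) := by
    have : g.coeff 1 = f.derivative.eval a₀ := hφinj hc1
    rw [this]; exact h₂
  set u : ↥O' := ↑hc1unit.unit⁻¹ with hu
  have huc : c 1 * φ u = 1 := by
    show φ (g.coeff 1) * φ u = 1
    rw [← map_mul]
    have : g.coeff 1 * u = 1 := by
      rw [hu]
      exact_mod_cast hc1unit.unit.mul_inv
    rw [this, map_one]
  have huO : (φ u) ∈ O' := u.2
  -- the normal form coefficients
  set e : ℕ → K := fun i => if i = 0 then 1 else c i * (c 0) ^ (i - 1) * (φ u) ^ i with he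
  have he0 : e 0 = 1 := by simp [he]
  have he1 : e 1 = 1 := by
    show (if (1 : ℕ) = 0 then (1:K) else c 1 * (c 0) ^ (1 - 1) * (φ u) ^ 1) = 1
    rw [if_neg one_ne_zero, Nat.sub_self, pow_zero, mul_one, pow_one]
    exact huc
  have hei : ∀ i, 2 ≤ i → i ≤ n → O.valuation (e i) < 1 := by
    intro i h2i hin
    have hlt' : O'.valuation (e i) < 1 := by
      show O'.valuation (if i = 0 then (1:K) else c i * (c 0) ^ (i - 1) * (φ u) ^ i) < 1
      rw [if_neg (by omega : ¬ i = 0), map_mul, map_mul, map_pow, map_pow]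
      obtain ⟨j, hj⟩ : ∃ j, i - 1 = j + 1 := ⟨i - 2, by omega⟩
      rw [hj]
      calc O'.valuation (c i) * O'.valuation (c 0) ^ (j + 1) * O'.valuation (φ u) ^ i
          ≤ 1 * O'.valuation (c 0) ^ (j + 1) * 1 :=
            mul_le_mul' (mul_le_mul' ((O'.valuation_le_one_iff _).mpr (hcmem i)) le_rfl)
              (pow_le_one' ((O'.valuation_le_one_iff _).mpr huO) i)
      _ = O'.valuation (c 0) * O'.valuation (c 0) ^ j := by rw [one_mul, mul_one, pow_succ']
      _ ≤ O'.valuation (c 0) * 1 := mul_le_mul_right (pow_le_one' hc0lt.le j) _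
      _ = O'.valuation (c 0) := mul_one _
      _ < 1 := hc0lt
    exact (ValuationSubring.mem_nonunits_iff _).mp
      ((ValuationSubring.nonunits_le_nonunits.mpr hle)
        ((ValuationSubring.mem_nonunits_iff _).mpr hlt'))
  obtain ⟨z, hz1, hzsum⟩ := exists_normalForm_root O hhens hn0 e he0 he1 hei
  have hvz : O.valuation z = 1 := by
    have hzz : z = (z + 1) + (-1) := by ring
    rw [hzz, Valuation.map_add_eq_of_lt_right _
      (by rw [Valuation.map_neg, map_one]; exact hz1), Valuation.map_neg, map_one]
  have hz0 : z ≠ 0 := fun h => by rw [h, map_zero] at hvz; exact zero_ne_one hvz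
  have hzinvO' : z⁻¹ ∈ O' := hle (O.mem_of_valuation_le_one _ (by rw [map_inv₀, hvz]; norm_num))
  set w : K := c 0 * φ u * z⁻¹ with hw
  have hwO' : w ∈ O' := mul_mem (mul_mem (hcmem 0) huO) hzinvO'
  have hwlt : O'.valuation w < 1 := by
    rw [hw, map_mul, map_mul]
    calc O'.valuation (c 0) * O'.valuation (φ u) * O'.valuation z⁻¹
        ≤ O'.valuation (c 0) * 1 * 1 :=
          mul_le_mul' (mul_le_mul' le_rfl ((O'.valuation_le_one_iff _).mpr huO))
            ((O'.valuation_le_one_iff _).mpr hzinvO')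
    _ = O'.valuation (c 0) := by rw [mul_one, mul_one]
    _ < 1 := hc0lt
  -- main identity
  have hgKeval : ∑ i ∈ Finset.range (n + 1), c i * w ^ i = 0 := by
    have hne : (c 0)⁻¹ * z ^ n ≠ 0 := mul_ne_zero (inv_ne_zero hc0ne) (pow_ne_zero _ hz0)
    have key : ∑ i ∈ Finset.range (n + 1), e i * z ^ (n - i)
        = ((c 0)⁻¹ * z ^ n) * ∑ i ∈ Finset.range (n + 1), c i * w ^ i := by
      rw [Finset.mul_sum]
      refine Finset.sum_congr rfl fun i hi => ?_
      rw [Finset.mem_range, Nat.lt_succ_iff] at hi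
      match i, hi with
      | 0, _ =>
        show e 0 * z ^ (n - 0) = (c 0)⁻¹ * z ^ n * (c 0 * w ^ 0)
        rw [he0, pow_zero, Nat.sub_zero, one_mul, mul_one]
        field_simp
      | (j+1), hi =>
        show e (j+1) * z ^ (n - (j+1)) = (c 0)⁻¹ * z ^ n * (c (j+1) * w ^ (j+1))
        have hesimp : e (j+1) = c (j+1) * (c 0) ^ j * (φ u) ^ (j+1) := by
          show (if j+1 = 0 then (1:K) else c (j+1) * (c 0) ^ (j+1-1) * (φ u) ^ (j+1)) = _
          rw [if_neg (by omega : ¬ j+1 = 0)]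
          norm_num
        have hzn : z ^ n = z ^ (n - (j+1)) * z ^ (j+1) := by
          rw [← pow_add]
          congr 1
          omega
        rw [hesimp, hw, hzn, mul_pow, mul_pow, inv_pow]
        field_simp
        ring
    rw [key] at hzsum
    rcases mul_eq_zero.mp hzsum with h | h
    · exact absurd h hne
    · exact h
  set W : ↥O' := ⟨w, hwO'⟩ with hW
  refine ⟨a₀ + W, ?_, ?_⟩
  · show f.eval (a₀ + W) = 0
    apply hφinj
    rw [map_zero]
    have hstep : φ (f.eval (a₀ + W)) = (f.map φ).eval (φ (a₀ + W)) := by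
      rw [eval_map, eval₂_at_apply]
    rw [hstep]
    have hφa : φ (a₀ + W) = w + φ a₀ := by rw [map_add, add_comm]; rfl
    rw [hφa]
    have hgmap : (g.map φ) = (f.map φ).comp (X + C (φ a₀)) := by
      rw [hg, map_comp, Polynomial.map_add, map_X, map_C]
    have hcomp : (f.map φ).eval (w + φ a₀) = (g.map φ).eval w := by
      rw [hgmap, eval_comp, eval_add, eval_X, eval_C]
    rw [hcomp, eval_eq_sum_range]
    have hdeg : (g.map φ).natDegree = n := by rw [hgmonic.natDegree_map, hgdeg]
    rw [hdeg]
    simpa [coeff_map] using hgKeval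
  · have hWW : a₀ + W - a₀ = W := by ring
    rw [hWW, ← ValuationSubring.coe_mem_nonunits_iff]
    exact (ValuationSubring.mem_nonunits_iff _).mpr hwlt

private def tpow {α : Type*} (u : Language.ring.Term α) : ℕ → Language.ring.Term α
  | 0 => 1
  | n + 1 => tpow u n * u

private lemma realize_tpow {α : Type*} (v : α → K) (u : Language.ring.Term α)
    (n : ℕ) : (tpow u n).realize v = (u.realize v) ^ n := by
  induction n with
  | zero => simp [tpow]
  | succ n ih => rw [pow_succ, ← ih]; simp [tpow]

lemma stabilizer_set_definable (p : ℕ) (t : K) :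
    ({t} : Set K).Definable₁ Language.ring
      {z : K | ∀ x : K, (∃ y : K, y ^ p - y = t * x ^ p) →
        (∃ y : K, y ^ p - y = t * (z * x) ^ p)} := by
  rw [Set.Definable₁, Set.definable_iff_exists_formula_sum]
  classical
  set β := (↥({t} : Set K)) ⊕ (Fin 1) with hβ
  let T2 : Language.ring.Term (β ⊕ Fin 2) :=
    Term.var (Sum.inl (Sum.inl ⟨t, Set.mem_singleton t⟩))
  let Z2 : Language.ring.Term (β ⊕ Fin 2) := Term.var (Sum.inl (Sum.inr 0))
  let X2 : Language.ring.Term (β ⊕ Fin 2) := Term.var (Sum.inr 0)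
  let Y2 : Language.ring.Term (β ⊕ Fin 2) := Term.var (Sum.inr 1)
  let eq1 : Language.ring.BoundedFormula β 2 :=
    Term.bdEqual (tpow Y2 p + (- Y2)) (T2 * tpow X2 p)
  let eq2 : Language.ring.BoundedFormula β 2 :=
    Term.bdEqual (tpow Y2 p + (- Y2)) (T2 * tpow (Z2 * X2) p)
  refine ⟨BoundedFormula.all ((eq1.ex).imp (eq2.ex)), ?_⟩
  ext v
  simp only [Set.mem_setOf_eq, Formula.Realize, BoundedFormula.realize_all,
    BoundedFormula.realize_imp, BoundedFormula.realize_ex, BoundedFormula.realize_bdEqual,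
    eq1, eq2, T2, Z2, X2, Y2, FirstOrder.Ring.realize_add, FirstOrder.Ring.realize_mul,
    FirstOrder.Ring.realize_neg, realize_tpow, Term.realize_var, Sum.elim_inl, Sum.elim_inr]
  have hsnoc1 : ∀ (a b : K), (Fin.snoc (Fin.snoc (default : Fin 0 → K) a) b : Fin 2 → K) 1 = b := by
    intro a b; simp [Fin.snoc]
  have hsnoc0 : ∀ (a b : K), (Fin.snoc (Fin.snoc (default : Fin 0 → K) a) b : Fin 2 → K) 0 = a := by
    intro a b; simp [Fin.snoc]
  simp only [hsnoc0, hsnoc1, ← sub_eq_add_neg]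

end HenselCoarsenAux

end AuxiliaryLemmas

/-- Proposition: henselian valuations with non-divisible value group have
nontrivial coarsenings definable with one parameter.
Let `K` be a field and `O` a nontrivial henselian valuation subring whose value group
`K^×/O^×` is not divisible, i.e. not `p`-divisible for some prime `p`. Then there are
`t ∈ K` and a nontrivial (henselian) coarsening `O'` of `O` which is `{t}`-definable. -/
theorem exists_oneParamDefinable_coarsening_of_not_divisible
    (O : ValuationSubring K) (hO : O ≠ ⊤) (hhens : HenselianLocalRing O)
    (hndiv : ∃ p : ℕ, p.Prime ∧ ¬ ValueGroupPDivisible O p) :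
    ∃ (t : K) (O' : ValuationSubring K), O ≤ O' ∧ O' ≠ ⊤ ∧ HenselianLocalRing O' ∧
      ({t} : Set K).Definable₁ Language.ring {x : K | x ∈ O'} := by
  classical
  obtain ⟨p, hp, hnd⟩ := hndiv
  have hp2 : 2 ≤ p := hp.two_le
  rw [ValueGroupPDivisible] at hnd
  push_neg at hnd
  obtain ⟨g, hg⟩ := hnd
  obtain ⟨t₀, ht₀⟩ := O.valuation_surjective (g : O.ValueGroup)
  have ht₀0 : t₀ ≠ 0 := by
    intro h
    rw [h, map_zero] at ht₀
    exact (Units.ne_zero g) ht₀.symm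
  have hnp : ∀ s : K, s ≠ 0 → O.valuation t₀ ≠ O.valuation s ^ p := by
    intro s hs heq
    have hvs : O.valuation s ≠ 0 := fun h => hs ((Valuation.zero_iff _).mp h)
    refine hg (Units.mk0 (O.valuation s) hvs) (Units.ext ?_)
    rw [Units.val_pow_eq_pow_val, Units.val_mk0, ← ht₀]
    exact heq
  -- arrange a parameter `t` with `v t < 1` that is not a `p`-th power in the value group
  obtain ⟨t, ht0, hvt1, hnpt⟩ : ∃ t : K, t ≠ 0 ∧ O.valuation t < 1 ∧
      ∀ s : K, s ≠ 0 → O.valuation t ≠ O.valuation s ^ p := by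
    rcases lt_trichotomy (O.valuation t₀) 1 with hlt | heq1 | hgt
    · exact ⟨t₀, ht₀0, hlt, hnp⟩
    · exfalso
      refine hg 1 (Units.ext ?_)
      rw [one_pow, Units.val_one, ← ht₀, heq1]
    · refine ⟨t₀⁻¹, inv_ne_zero ht₀0, ?_, ?_⟩
      · rw [map_inv₀]
        have h0 : O.valuation t₀ ≠ 0 := fun h => ht₀0 ((Valuation.zero_iff _).mp h)
        rw [inv_lt_one₀ (lt_of_le_of_ne zero_le' (Ne.symm h0))]
        exact hgt
      · intro s hs heq
        refine hnp s⁻¹ (inv_ne_zero hs) ?_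
        rw [map_inv₀, inv_pow, ← heq, map_inv₀, inv_inv]
  refine ⟨t, HenselCoarsenAux.stabilizerValuationSubring O hp2 t,
    HenselCoarsenAux.le_stabilizer O hp2 t,
    HenselCoarsenAux.stabilizer_ne_top O hp2 ht0 hvt1,
    HenselCoarsenAux.henselianLocalRing_of_le O _ (HenselCoarsenAux.le_stabilizer O hp2 t) hhens,
    ?_⟩
  have hset : {x : K | x ∈ HenselCoarsenAux.stabilizerValuationSubring O hp2 t} =
      {z : K | ∀ x : K, (∃ y : K, y ^ p - y = t * x ^ p) →
        (∃ y : K, y ^ p - y = t * (z * x) ^ p)} := by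
    ext z
    simp only [Set.mem_setOf_eq, HenselCoarsenAux.mem_stabilizer_iff]
    constructor
    · intro hz x hx
      exact (HenselCoarsenAux.artinSchreier_set_char O hhens hp2 hnpt (z * x)).mpr
        (hz x ((HenselCoarsenAux.artinSchreier_set_char O hhens hp2 hnpt x).mp hx))
    · intro hz x hx
      exact (HenselCoarsenAux.artinSchreier_set_char O hhens hp2 hnpt (z * x)).mp
        (hz x ((HenselCoarsenAux.artinSchreier_set_char O hhens hp2 hnpt x).mpr hx))
  rw [hset]
  exact HenselCoarsenAux.stabilizer_set_definable p t
end
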